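/- Let (X,d,μ) be a metric measure space with μ a doubling measure and ξ a doubling gauge function of codimension at least Q > p > 0. Then there exists a constant K₁ ≥ 1 (depending only on the doubling constants of ξ and μ and the codimension constant K) such that the following holds: for any ball B₀ = B(x₀, r₀) and any countable collection ℬ of balls with rad(ℬ) ≤ r₀ and B' ∩ B₀ ≠ ∅ for every B' ∈ ℬ, one has K₁ · ξ(ℬ)/ξ(B₀) ≥ h_Q(ℬ)/h_Q(B₀) ≥ (h_p(ℬ)/h_p(B₀)) · (rad(B₀)/rad(ℬ))^{Q−p}, where h_q(B) = μ(B)/rad(B)^q and for a collection 𝒜, h_q(𝒜) = Σ_{B∈𝒜} h_q(B). -/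

import Mathlib

open Metric Set MeasureTheory ENNReal

noncomputable section

namespace Paper

variable {X : Type*}

/-- The subcollection of balls (center, radius pairs) whose ball meets `A`. -/
def restr [MetricSpace X] (C : Set (X × ℝ)) (A : Set X) : Set (X × ℝ) :=
  {B ∈ C | (Metric.ball B.1 B.2 ∩ A).Nonempty}

/-- Total gauge mass of a collection of balls. -/
def gaugeSum (ξ : X → ℝ → ℝ≥0∞) (C : Set (X × ℝ)) : ℝ≥0∞ :=
  ∑' B : C, ξ (B : X × ℝ).1 (B : X × ℝ).2

/-- Hausdorff content at scale `r` with respect to a gauge `ξ`. -/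
def gaugeContent [MetricSpace X] (ξ : X → ℝ → ℝ≥0∞) (r : ℝ) (A : Set X) : ℝ≥0∞ :=
  ⨅ (C : Set (X × ℝ)) (_ : C.Countable) (_ : ∀ B ∈ C, 0 < B.2 ∧ B.2 ≤ r)
    (_ : A ⊆ ⋃ B ∈ C, Metric.ball B.1 B.2), gaugeSum ξ C

/-- A doubling gauge function with constant `D`. -/
def DoublingGauge [MetricSpace X] (ξ : X → ℝ → ℝ≥0∞) (D : ℝ≥0∞) : Prop :=
  (∀ (x : X) (r : ℝ), 0 < r → 0 < ξ x r ∧ ξ x r < ⊤) ∧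
  ∀ (x x' : X) (r r' : ℝ), 0 < r' → r' ≤ r → r ≤ 2 * r' →
    (Metric.ball x' r' ∩ Metric.ball x r).Nonempty →
    ξ x' r' ≤ D * ξ x r ∧ ξ x r ≤ D * ξ x' r'

/-- `X` is metrically `N`-doubling: every ball of radius `r` contains at most `N`
pairwise `r/2`-separated points. -/
def MetricDoubling (X : Type*) [MetricSpace X] (N : ℕ) : Prop :=
  ∀ (x : X) (r : ℝ) (S : Finset X), (↑S ⊆ Metric.ball x r) →
    (∀ y ∈ S, ∀ z ∈ S, y ≠ z → r / 2 ≤ dist y z) → S.card ≤ N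

/-- `μ` is a doubling measure with constant `D`. -/
def DoublingMeasure [MetricSpace X] [MeasurableSpace X] (μ : Measure X) (D : ℝ≥0∞) : Prop :=
  ∀ (x : X) (r : ℝ), 0 < r →
    0 < μ (Metric.ball x r) ∧ μ (Metric.ball x r) < ⊤ ∧
    μ (Metric.ball x (2 * r)) ≤ D * μ (Metric.ball x r)

/-- The codimension-`q` gauge `h_q(B) = μ(B)/rad(B)^q`. -/
def hGauge [MetricSpace X] [MeasurableSpace X] (μ : Measure X) (q : ℝ) (x : X) (r : ℝ) : ℝ≥0∞ :=
  μ (Metric.ball x r) / ENNReal.ofReal (r ^ q)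

/-- Total `h_q` mass of a collection of balls. -/
def hSum [MetricSpace X] [MeasurableSpace X] (μ : Measure X) (q : ℝ) (C : Set (X × ℝ)) : ℝ≥0∞ :=
  ∑' B : C, hGauge μ q (B : X × ℝ).1 (B : X × ℝ).2

/-- `ξ` has codimension at least `Q` (with constant `K`). -/
def HasCodimAtLeast [MetricSpace X] [MeasurableSpace X] (ξ : X → ℝ → ℝ≥0∞)
    (μ : Measure X) (Q : ℝ) (K : ℝ≥0∞) : Prop :=
  ∀ (x : X) (r R : ℝ), 0 < r → r ≤ R →
    ξ x R / ξ x r ≤ K * (hGauge μ Q x R / hGauge μ Q x r)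

/-- `X` is a geodesic space: any two points are joined by a curve of length `dist x y`. -/
def GeodesicSpace (X : Type*) [MetricSpace X] : Prop :=
  ∀ x y : X, ∃ γ : ℝ → X, γ 0 = x ∧ γ 1 = y ∧ ContinuousOn γ (Set.Icc 0 1) ∧
    eVariationOn γ (Set.Icc 0 1) = ENNReal.ofReal (dist x y)

/-- A `c`-John curve on the parameter interval `[a, b]`: every tail subcurve from `γ t`
has length at most `c · d(γ t, ∂Ω)`. -/
def IsJohnCurve [MetricSpace X] (Ω : Set X) (c : ℝ) (γ : ℝ → X) (a b : ℝ) : Prop :=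
  ContinuousOn γ (Set.Icc a b) ∧ eVariationOn γ (Set.Icc a b) < ⊤ ∧
  ∀ t ∈ Set.Icc a b, eVariationOn γ (Set.Icc t b) ≤
    ENNReal.ofReal (c * Metric.infDist (γ t) (frontier Ω))

/-- The `c`-accessible boundary of `Ω` from `x₀`. -/
def accBoundary [MetricSpace X] (Ω : Set X) (x₀ : X) (c : ℝ) : Set X :=
  {w ∈ frontier Ω | ∃ γ : ℝ → X, γ 0 = x₀ ∧ γ 1 = w ∧ IsJohnCurve Ω c γ 0 1}

/-- `g = sup_{B ∈ ℬ} (1/rad B) · 1_{2B}`. -/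
def ballSup [MetricSpace X] (ℬ : Set (X × ℝ)) : X → ℝ≥0∞ :=
  fun w => ⨆ (B : ℬ) (_ : w ∈ Metric.ball (B : X × ℝ).1 (2 * (B : X × ℝ).2)),
    (ENNReal.ofReal (B : X × ℝ).2)⁻¹

/-- The restricted (uncentered) maximal function at scale `s`. -/
def restrMax [MetricSpace X] [MeasurableSpace X] (μ : Measure X) (g : X → ℝ≥0∞)
    (s : ℝ) (x : X) : ℝ≥0∞ :=
  ⨆ (z : X) (ρ : ℝ) (_ : 0 < ρ) (_ : ρ < s) (_ : x ∈ Metric.ball z ρ),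
    (∫⁻ w in Metric.ball z ρ, g w ∂μ) / μ (Metric.ball z ρ)

/-- `g` is an upper gradient of `f`: the upper gradient inequality holds along all
unit-speed (1-Lipschitz) curves. -/
def IsUpperGradient [MetricSpace X] (f : X → ℝ) (g : X → ℝ≥0∞) : Prop :=
  ∀ (L : ℝ) (γ : ℝ → X), 0 ≤ L → LipschitzOnWith 1 γ (Set.Icc 0 L) →
    ENNReal.ofReal |f (γ L) - f (γ 0)| ≤ ∫⁻ t in Set.Icc 0 L, g (γ t)

/-- The `p`-Poincaré inequality with constants `CP, lam`. -/
def PoincareIneq [MetricSpace X] [MeasurableSpace X] (μ : Measure X)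
    (p CP lam : ℝ) : Prop :=
  ∀ (f : X → ℝ) (g : X → ℝ≥0∞), MeasureTheory.LocallyIntegrable f μ → Measurable g →
    IsUpperGradient f g →
    ∀ (x : X) (r : ℝ), 0 < r →
      ⨍ y in Metric.ball x r, |f y - ⨍ w in Metric.ball x r, f w ∂μ| ∂μ ≤
        CP * r * (((∫⁻ w in Metric.ball x (lam * r), g w ^ p ∂μ) /
          μ (Metric.ball x (lam * r))).toReal) ^ (1 / p)

/-- The pointwise `p`-Poincaré inequality with constants `(CP, L, lam)`. -/
def PointwisePoincare [MetricSpace X] [MeasurableSpace X] (μ : Measure X)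
    (p CP L lam : ℝ) : Prop :=
  ∀ (x y : X) (g : X → ℝ≥0∞), Measurable g →
    (⨅ (ℓ : ℝ) (γ : ℝ → X) (_ : 0 ≤ ℓ) (_ : ℓ ≤ L * dist x y)
        (_ : LipschitzOnWith 1 γ (Set.Icc 0 ℓ)) (_ : γ 0 = x) (_ : γ ℓ = y)
        (_ : ∀ t ∈ Set.Icc 0 ℓ, γ t ∈ Metric.ball x (2 * lam * dist x y)),
        ∫⁻ t in Set.Icc 0 ℓ, g (γ t)) ≤
      ENNReal.ofReal (CP * dist x y) *
        (restrMax μ (fun w => g w ^ p) (lam * dist x y) x +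
         restrMax μ (fun w => g w ^ p) (lam * dist x y) y) ^ (1 / p)

/-- The `s`-dimensional Hausdorff content (at scale `∞`). -/
def sContent {Y : Type*} [MetricSpace Y] (s : ℝ) (A : Set Y) : ℝ≥0∞ :=
  ⨅ (t : ℕ → Set Y) (_ : A ⊆ ⋃ n, t n), ∑' n, EMetric.diam (t n) ^ s

end Paper

namespace ContentAux

open Metric Set MeasureTheory ENNReal Paper

lemma div_le_div_iff' {a b c d : ℝ≥0∞} (hb0 : b ≠ 0) (hbt : b ≠ ⊤)
    (hd0 : d ≠ 0) (hdt : d ≠ ⊤) : a / b ≤ c / d ↔ a * d ≤ c * b := by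
  rw [ENNReal.div_le_iff hb0 hbt, div_eq_mul_inv, mul_right_comm, ← div_eq_mul_inv,
    ENNReal.le_div_iff_mul_le (Or.inl hd0) (Or.inl hdt)]

lemma hGauge_pos {X : Type*} [MetricSpace X] [MeasurableSpace X] {μ : Measure X}
    {D : ℝ≥0∞} (hμ : DoublingMeasure μ D) (q : ℝ) (x : X) {r : ℝ} (hr : 0 < r) :
    hGauge μ q x r ≠ 0 ∧ hGauge μ q x r ≠ ⊤ := by
  obtain ⟨h1, h2, -⟩ := hμ x r hr
  constructor
  · exact (ENNReal.div_pos h1.ne' ENNReal.ofReal_ne_top).ne'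
  · exact (ENNReal.div_lt_top h2.ne
      (ENNReal.ofReal_pos.mpr (Real.rpow_pos_of_pos hr q)).ne').ne

lemma term_one {X : Type*} [MetricSpace X] [MeasurableSpace X] (μ : Measure X)
    (D : ℝ≥0∞) (hD : 1 ≤ D) (hDt : D < ⊤) (hμ : DoublingMeasure μ D)
    (ξ : X → ℝ → ℝ≥0∞) (hξ : DoublingGauge ξ D) (Q : ℝ)
    (K : ℝ≥0∞) (hcodim : HasCodimAtLeast ξ μ Q K)
    (x₀ x : X) (r₀ r : ℝ) (hr₀ : 0 < r₀) (hr : 0 < r) (hrr : r ≤ r₀)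
    (hint : (Metric.ball x r ∩ Metric.ball x₀ r₀).Nonempty) :
    hGauge μ Q x r / hGauge μ Q x₀ r₀ ≤ (D ^ 3 * K) * (ξ x r / ξ x₀ r₀) := by
  obtain ⟨ha0, hat⟩ := hGauge_pos hμ Q x hr
  obtain ⟨hA0, hAt⟩ := hGauge_pos hμ Q x hr₀
  obtain ⟨hA00, hA0t⟩ := hGauge_pos hμ Q x₀ hr₀
  obtain ⟨hb, hbt'⟩ := hξ.1 x r hr
  obtain ⟨hB, hBt'⟩ := hξ.1 x r₀ hr₀
  obtain ⟨hB0, hB0t'⟩ := hξ.1 x₀ r₀ hr₀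
  -- codimension inequality in multiplied form
  have h1 : ξ x r₀ * hGauge μ Q x r ≤ K * hGauge μ Q x r₀ * ξ x r := by
    have := hcodim x r r₀ hr hrr
    rw [← mul_div_assoc] at this
    exact (div_le_div_iff' hb.ne' hbt'.ne ha0 hat).mp this
  -- gauge doubling
  have h2 : ξ x₀ r₀ ≤ D * ξ x r₀ := by
    have hne : (Metric.ball x r₀ ∩ Metric.ball x₀ r₀).Nonempty := by
      obtain ⟨z, hz1, hz2⟩ := hint
      exact ⟨z, Metric.ball_subset_ball hrr hz1, hz2⟩
    exact (hξ.2 x₀ x r₀ r₀ hr₀ le_rfl (by linarith) hne).2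
  -- measure doubling comparison
  have h3 : hGauge μ Q x r₀ ≤ D ^ 2 * hGauge μ Q x₀ r₀ := by
    have hdist : dist x x₀ < 2 * r₀ := by
      obtain ⟨z, hz1, hz2⟩ := hint
      have := dist_triangle x z x₀
      rw [Metric.mem_ball, dist_comm] at hz1
      rw [Metric.mem_ball] at hz2
      linarith
    have hsub : Metric.ball x r₀ ⊆ Metric.ball x₀ (2 * (2 * r₀)) :=
      Metric.ball_subset_ball' (by linarith)
    have hmeas : μ (Metric.ball x r₀) ≤ D ^ 2 * μ (Metric.ball x₀ r₀) := by
      calc μ (Metric.ball x r₀) ≤ μ (Metric.ball x₀ (2 * (2 * r₀))) := measure_mono hsub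
        _ ≤ D * μ (Metric.ball x₀ (2 * r₀)) := (hμ x₀ (2 * r₀) (by linarith)).2.2
        _ ≤ D * (D * μ (Metric.ball x₀ r₀)) := mul_le_mul_right (hμ x₀ r₀ hr₀).2.2 D
        _ = D ^ 2 * μ (Metric.ball x₀ r₀) := by ring
    calc hGauge μ Q x r₀ = μ (Metric.ball x r₀) / ENNReal.ofReal (r₀ ^ Q) := rfl
      _ ≤ (D ^ 2 * μ (Metric.ball x₀ r₀)) / ENNReal.ofReal (r₀ ^ Q) :=
          ENNReal.div_le_div_right hmeas _
      _ = D ^ 2 * hGauge μ Q x₀ r₀ := by rw [mul_div_assoc]; rfl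
  rw [← mul_div_assoc]
  rw [div_le_div_iff' hA00 hA0t hB0.ne' hB0t'.ne]
  calc hGauge μ Q x r * ξ x₀ r₀ ≤ hGauge μ Q x r * (D * ξ x r₀) := mul_le_mul_right h2 _
    _ = D * (ξ x r₀ * hGauge μ Q x r) := by ring
    _ ≤ D * (K * hGauge μ Q x r₀ * ξ x r) := mul_le_mul_right h1 D
    _ ≤ D * (K * (D ^ 2 * hGauge μ Q x₀ r₀) * ξ x r) := by
        exact mul_le_mul_right (mul_le_mul_left (mul_le_mul_right h3 K) _) D
    _ = D ^ 3 * K * ξ x r * hGauge μ Q x₀ r₀ := by ring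

lemma hGauge_eq {X : Type*} [MetricSpace X] [MeasurableSpace X] (μ : Measure X)
    (q : ℝ) (x : X) {r : ℝ} (hr : 0 < r) :
    hGauge μ q x r = μ (Metric.ball x r) * ENNReal.ofReal (r ^ (-q)) := by
  rw [hGauge, div_eq_mul_inv, Real.rpow_neg hr.le,
    ENNReal.ofReal_inv_of_pos (Real.rpow_pos_of_pos hr q)]

lemma term_two {X : Type*} [MetricSpace X] [MeasurableSpace X] (μ : Measure X)
    {D : ℝ≥0∞} (hμ : DoublingMeasure μ D) (p Q : ℝ) (hpQ : p ≤ Q)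
    (x₀ x : X) (r₀ r s : ℝ) (hr₀ : 0 < r₀) (hr : 0 < r) (hrs : r ≤ s) :
    hGauge μ p x r / hGauge μ p x₀ r₀ * ENNReal.ofReal ((r₀ / s) ^ (Q - p)) ≤
      hGauge μ Q x r / hGauge μ Q x₀ r₀ := by
  have hs : 0 < s := lt_of_lt_of_le hr hrs
  obtain ⟨hAp0, hApt⟩ := hGauge_pos hμ p x₀ hr₀
  obtain ⟨hAQ0, hAQt⟩ := hGauge_pos hμ Q x₀ hr₀
  rw [div_eq_mul_inv, mul_right_comm, ← div_eq_mul_inv,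
    div_le_div_iff' hAp0 hApt hAQ0 hAQt]
  rw [hGauge_eq μ p x hr, hGauge_eq μ Q x hr, hGauge_eq μ p x₀ hr₀, hGauge_eq μ Q x₀ hr₀]
  set m := μ (Metric.ball x r)
  set m₀ := μ (Metric.ball x₀ r₀)
  have e1 : m * ENNReal.ofReal (r ^ (-p)) * ENNReal.ofReal ((r₀ / s) ^ (Q - p)) *
      (m₀ * ENNReal.ofReal (r₀ ^ (-Q))) =
      m * m₀ * ENNReal.ofReal (r ^ (-p) * ((r₀ / s) ^ (Q - p) * r₀ ^ (-Q))) := by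
    rw [ENNReal.ofReal_mul (by positivity), ENNReal.ofReal_mul (by positivity)]
    ring
  have e2 : m * ENNReal.ofReal (r ^ (-Q)) * (m₀ * ENNReal.ofReal (r₀ ^ (-p))) =
      m * m₀ * ENNReal.ofReal (r ^ (-Q) * r₀ ^ (-p)) := by
    rw [ENNReal.ofReal_mul (by positivity)]
    ring
  rw [e1, e2]
  refine mul_le_mul_right (ENNReal.ofReal_le_ofReal ?_) _
  have key : r ^ (Q - p) * (r₀ / s) ^ (Q - p) ≤ r₀ ^ (Q - p) := by
    rw [← Real.mul_rpow hr.le (by positivity)]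
    refine Real.rpow_le_rpow (by positivity) ?_ (by linarith)
    calc r * (r₀ / s) = r₀ * (r / s) := by ring
      _ ≤ r₀ * 1 := by
          refine mul_le_mul_of_nonneg_left ?_ hr₀.le
          rw [div_le_one hs]; exact hrs
      _ = r₀ := mul_one r₀
  have erp : r ^ (-p) = r ^ (-Q) * r ^ (Q - p) := by
    rw [← Real.rpow_add hr]; ring_nf
  have erq : r₀ ^ (-p) = r₀ ^ (-Q) * r₀ ^ (Q - p) := by
    rw [← Real.rpow_add hr₀]; ring_nf
  rw [erp, erq]
  calc r ^ (-Q) * r ^ (Q - p) * ((r₀ / s) ^ (Q - p) * r₀ ^ (-Q))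
      = (r ^ (-Q) * r₀ ^ (-Q)) * (r ^ (Q - p) * (r₀ / s) ^ (Q - p)) := by ring
    _ ≤ (r ^ (-Q) * r₀ ^ (-Q)) * r₀ ^ (Q - p) := by
        exact mul_le_mul_of_nonneg_left key (by positivity)
    _ = r ^ (-Q) * (r₀ ^ (-Q) * r₀ ^ (Q - p)) := by ring

end ContentAux

theorem content_comparison {X : Type*} [MetricSpace X] [MeasurableSpace X] (μ : Measure X)
    (D : ℝ≥0∞) (hD : 1 ≤ D) (hDt : D < ⊤) (hμ : Paper.DoublingMeasure μ D)
    (ξ : X → ℝ → ℝ≥0∞) (hξ : Paper.DoublingGauge ξ D)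
    (p Q : ℝ) (hp : 0 < p) (hpQ : p < Q)
    (K : ℝ≥0∞) (hK : 1 ≤ K) (hKt : K < ⊤) (hcodim : Paper.HasCodimAtLeast ξ μ Q K) :
    ∃ K₁ : ℝ≥0∞, 1 ≤ K₁ ∧ K₁ < ⊤ ∧
      ∀ (x₀ : X) (r₀ : ℝ), 0 < r₀ →
        ∀ ℬ : Set (X × ℝ), ℬ.Countable →
          (∀ B ∈ ℬ, 0 < B.2 ∧ B.2 ≤ r₀ ∧
            (Metric.ball B.1 B.2 ∩ Metric.ball x₀ r₀).Nonempty) →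
          Paper.hSum μ Q ℬ / Paper.hGauge μ Q x₀ r₀ ≤
              K₁ * (Paper.gaugeSum ξ ℬ / ξ x₀ r₀) ∧
            (Paper.hSum μ p ℬ / Paper.hGauge μ p x₀ r₀) *
                ENNReal.ofReal ((r₀ / (⨆ B : ℬ, (B : X × ℝ).2)) ^ (Q - p)) ≤
              Paper.hSum μ Q ℬ / Paper.hGauge μ Q x₀ r₀ := by
  classical
  refine ⟨D ^ 3 * K, ?_, ?_, ?_⟩
  · calc (1 : ℝ≥0∞) = 1 * 1 := (one_mul 1).symm
      _ ≤ D ^ 3 * K := mul_le_mul' (one_le_pow_of_one_le' hD 3) hK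
  · exact ENNReal.mul_lt_top (ENNReal.pow_lt_top (n := 3) hDt) hKt
  intro x₀ r₀ hr₀ ℬ hcount hballs
  have hBdd : BddAbove (Set.range fun B : ℬ => (B : X × ℝ).2) := by
    refine ⟨r₀, ?_⟩
    rintro _ ⟨B, rfl⟩
    exact (hballs B.1 B.2).2.1
  set s : ℝ := ⨆ B : ℬ, (B : X × ℝ).2 with hs_def
  obtain ⟨hA00, hA0t⟩ := ContentAux.hGauge_pos hμ Q x₀ hr₀
  obtain ⟨hAp0, hApt⟩ := ContentAux.hGauge_pos hμ p x₀ hr₀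
  have eqQ : Paper.hSum μ Q ℬ / Paper.hGauge μ Q x₀ r₀
      = ∑' B : ℬ, Paper.hGauge μ Q (B : X × ℝ).1 (B : X × ℝ).2 / Paper.hGauge μ Q x₀ r₀ := by
    simp only [Paper.hSum, div_eq_mul_inv, ENNReal.tsum_mul_right]
  constructor
  · -- first inequality
    have eqξ : D ^ 3 * K * (Paper.gaugeSum ξ ℬ / ξ x₀ r₀)
        = ∑' B : ℬ, D ^ 3 * K * (ξ (B : X × ℝ).1 (B : X × ℝ).2 / ξ x₀ r₀) := by
      simp only [Paper.gaugeSum, div_eq_mul_inv, ENNReal.tsum_mul_right,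
        ENNReal.tsum_mul_left]
    rw [eqQ, eqξ]
    refine ENNReal.tsum_le_tsum fun B => ?_
    obtain ⟨hBr, hBr₀, hBint⟩ := hballs B.1 B.2
    exact ContentAux.term_one μ D hD hDt hμ ξ hξ Q K hcodim x₀ (B : X × ℝ).1 r₀
      (B : X × ℝ).2 hr₀ hBr hBr₀ hBint
  · -- second inequality
    have eqpt : Paper.hSum μ p ℬ / Paper.hGauge μ p x₀ r₀ *
        ENNReal.ofReal ((r₀ / s) ^ (Q - p))
        = ∑' B : ℬ, Paper.hGauge μ p (B : X × ℝ).1 (B : X × ℝ).2 / Paper.hGauge μ p x₀ r₀ *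
            ENNReal.ofReal ((r₀ / s) ^ (Q - p)) := by
      simp only [Paper.hSum, div_eq_mul_inv, ENNReal.tsum_mul_right]
    rw [eqpt, eqQ]
    refine ENNReal.tsum_le_tsum fun B => ?_
    obtain ⟨hBr, hBr₀, hBint⟩ := hballs B.1 B.2
    have hle : (B : X × ℝ).2 ≤ s := le_ciSup hBdd B
    exact ContentAux.term_two μ hμ p Q hpQ.le x₀ (B : X × ℝ).1 r₀ (B : X × ℝ).2 s
      hr₀ hBr hle
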